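/- Let V be a vector space over F_q (q odd) with a nondegenerate symmetric bilinear form, and let a, b, c span a 3-dimensional subspace U = ⟨a,b,c⟩ that is nondegenerate, where ⟨a⟩, ⟨b⟩, ⟨c⟩ are nondegenerate 1-dimensional subspaces pairwise spanning elliptic 2-dimensional subspaces. If dim V ≥ 5 and the form on V is of plus type, then there exists a nondegenerate 1-dimensional subspace ⟨p⟩ ≤ U^⊥ such that ⟨a,b,c,p⟩ is a nondegenerate 4-dimensional subspace of plus type. -/

import Mathlib

open Module

/-- Plus type convention for a nondegenerate symmetric bilinear form over a finite
field of odd order, via the discriminant (Gram determinant modulo squares). -/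
def BIsPlusType {F M : Type*} [Field F] [AddCommGroup M] [Module F M]
    (B : LinearMap.BilinForm F M) : Prop :=
  ∃ (d : ℕ) (b : Basis (Fin d) F M),
    if Even d then IsSquare ((-1 : F) ^ (d / 2) * (Matrix.of fun i j => B (b i) (b j)).det)
    else (IsSquare ((-1 : F) ^ (d / 2) * (Matrix.of fun i j => B (b i) (b j)).det) ↔
      IsSquare (-1 : F))

/-- A subspace `W` is an *elliptic line* for `B` if it is 2-dimensional,
nondegenerate and anisotropic. -/
def IsEllipticLine {F V : Type*} [Field F] [AddCommGroup V] [Module F V]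
    (B : LinearMap.BilinForm F V) (W : Submodule F V) : Prop :=
  finrank F W = 2 ∧ (B.restrict W).Nondegenerate ∧ ∀ v ∈ W, B v v = 0 → v = 0

set_option maxHeartbeats 1000000 in
/-- Over `F_q` (`q` odd), in a space of dimension ≥ 5 with a nondegenerate symmetric
bilinear form of plus type: if `a`, `b`, `c` span a nondegenerate 3-space `U`, with
`⟨a⟩`, `⟨b⟩`, `⟨c⟩` nondegenerate points pairwise spanning elliptic lines, then there
is a nondegenerate point `⟨p⟩` in `U^⊥` such that `⟨a,b,c,p⟩` is a nondegenerate
4-dimensional subspace of plus type. -/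
theorem triangle_in_plus_four_space
    {F V : Type*} [Field F] [Fintype F] [AddCommGroup V] [Module F V]
    (q : ℕ) (hq : Fintype.card F = q) (hodd : Odd q)
    (hdim : 5 ≤ finrank F V)
    (B : LinearMap.BilinForm F V) (hsymm : B.IsSymm) (hB : B.Nondegenerate)
    (hplus : BIsPlusType B)
    (a b c : V) (ha : B a a ≠ 0) (hb : B b b ≠ 0) (hc : B c c ≠ 0)
    (hab : IsEllipticLine B (Submodule.span F {a, b}))
    (hbc : IsEllipticLine B (Submodule.span F {b, c}))
    (hac : IsEllipticLine B (Submodule.span F {a, c}))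
    (hU3 : finrank F (Submodule.span F {a, b, c} : Submodule F V) = 3)
    (hUnd : (B.restrict (Submodule.span F {a, b, c})).Nondegenerate) :
    ∃ p : V, B p p ≠ 0 ∧ (∀ u ∈ Submodule.span F {a, b, c}, B u p = 0) ∧
      finrank F (Submodule.span F {a, b, c} ⊔ Submodule.span F {p} : Submodule F V) = 4 ∧
      (B.restrict (Submodule.span F {a, b, c} ⊔ Submodule.span F {p})).Nondegenerate ∧
      BIsPlusType (B.restrict (Submodule.span F {a, b, c} ⊔ Submodule.span F {p})) := by
  classical
  have hFD : FiniteDimensional F V := Module.finite_of_finrank_pos (by omega)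
  set U : Submodule F V := Submodule.span F {a, b, c} with hUdef
  have hrefl : B.IsRefl := hsymm.isRefl
  -- characteristic is odd
  have hcardodd : Fintype.card F % 2 = 1 := by rw [hq]; exact Nat.odd_iff.mp hodd
  have hchar : ringChar F ≠ 2 := by
    intro h
    have := FiniteField.even_card_iff_char_two.mp h
    omega
  haveI : Invertible (2 : F) := invertibleOfNonzero (Ring.two_ne_zero hchar)
  -- the orthogonal complement W of U
  set W : Submodule F V := B.orthogonal U with hWdef
  have hcompl : IsCompl U W := B.isCompl_orthogonal_of_restrict_nondegenerate hrefl hUnd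
  have hrankUW : finrank F U + finrank F W = finrank F V :=
    Submodule.finrank_add_eq_of_isCompl hcompl
  have hW2 : 2 ≤ finrank F W := by omega
  -- B restricted to W is nondegenerate
  have hWnd : (B.restrict W).Nondegenerate := by
    refine LinearMap.BilinForm.Nondegenerate.ofSeparatingLeft ?_
    rintro ⟨x, hxW⟩ hxall
    rw [Submodule.mk_eq_zero]
    apply hB.1
    intro v
    have hv : v ∈ U ⊔ W := by rw [hcompl.sup_eq_top]; trivial
    obtain ⟨u, hu, w, hw, rfl⟩ := Submodule.mem_sup.mp hv
    have h1 : B x u = 0 := hrefl u x (hxW u hu)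
    have h2 : B x w = 0 := by simpa using hxall ⟨w, hw⟩
    simp [h1, h2]
  -- orthogonal basis of U
  have hUsymm : (B.restrict U).IsSymm := ⟨fun x y => hsymm.eq x y⟩
  obtain ⟨e₀, he₀⟩ := LinearMap.BilinForm.exists_orthogonal_basis (LinearMap.BilinForm.isSymm_iff.mp hUsymm)
  let e : Basis (Fin 3) F U := e₀.reindex (finCongr hU3)
  have heO : (B.restrict U).iIsOrtho ⇑e := by
    intro i j hij
    show (B.restrict U) (e i) (e j) = 0
    rw [Module.Basis.reindex_apply, Module.Basis.reindex_apply]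
    exact he₀ ((finCongr hU3).symm.injective.ne hij)
  have he : ∀ i j : Fin 3, i ≠ j → B (e i : V) (e j : V) = 0 := fun i j hij => heO hij
  have hed : ∀ i : Fin 3, B (e i : V) (e i : V) ≠ 0 := fun i =>
    heO.not_isOrtho_basis_self_of_nondegenerate hUnd i
  -- orthogonal basis of W
  have hWsymm : (B.restrict W).IsSymm := ⟨fun x y => hsymm.eq x y⟩
  obtain ⟨f, hf⟩ := LinearMap.BilinForm.exists_orthogonal_basis (LinearMap.BilinForm.isSymm_iff.mp hWsymm)
  let i0 : Fin (finrank F W) := ⟨0, by omega⟩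
  let i1 : Fin (finrank F W) := ⟨1, by omega⟩
  have hi01 : i0 ≠ i1 := by simp [i0, i1, Fin.ext_iff]
  set w₁ : V := (f i0 : V) with hw₁def
  set w₂ : V := (f i1 : V) with hw₂def
  have hα : B w₁ w₁ ≠ 0 :=
    LinearMap.BilinForm.iIsOrtho.not_isOrtho_basis_self_of_nondegenerate hf hWnd i0
  have hβ : B w₂ w₂ ≠ 0 :=
    LinearMap.BilinForm.iIsOrtho.not_isOrtho_basis_self_of_nondegenerate hf hWnd i1
  have hw12 : B w₁ w₂ = 0 := hf hi01
  have hw21 : B w₂ w₁ = 0 := hrefl _ _ hw12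
  set α : F := B w₁ w₁
  set β : F := B w₂ w₂
  -- the target value
  set t : F := B (e 0 : V) (e 0 : V) * B (e 1 : V) (e 1 : V) * B (e 2 : V) (e 2 : V) with htdef
  have ht0 : t ≠ 0 := by
    simp only [htdef]
    exact mul_ne_zero (mul_ne_zero (hed 0) (hed 1)) (hed 2)
  -- solve α x² + β y² = t
  obtain ⟨x, y, hxy⟩ := FiniteField.exists_root_sum_quadratic
    (f := Polynomial.C α * Polynomial.X ^ 2)
    (g := Polynomial.C β * Polynomial.X ^ 2 + Polynomial.C 0 * Polynomial.X + Polynomial.C (-t))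
    (Polynomial.degree_C_mul_X_pow 2 hα) (Polynomial.degree_quadratic hβ) hcardodd
  simp only [Polynomial.eval_add, Polynomial.eval_mul, Polynomial.eval_pow, Polynomial.eval_C,
    Polynomial.eval_X, Polynomial.C_0, zero_mul, add_zero, zero_add] at hxy
  have hsol : α * x ^ 2 + β * y ^ 2 = t := by linear_combination hxy
  -- the point p
  set p : V := x • w₁ + y • w₂ with hpdef
  have hpW : p ∈ W := W.add_mem (W.smul_mem _ (f i0).2) (W.smul_mem _ (f i1).2)
  have hBpp : B p p = t := by
    have : B p p = α * x ^ 2 + β * y ^ 2 := by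
      simp only [hpdef, map_add, map_smul, LinearMap.add_apply, LinearMap.smul_apply,
        smul_eq_mul, hw12, hw21]
      ring
    rw [this, hsol]
  have hp0 : p ≠ 0 := by
    intro h
    rw [h] at hBpp
    simp at hBpp
    exact ht0 hBpp.symm
  have hpU : ∀ u ∈ U, B u p = 0 := fun u hu => hpW u hu
  have hBep : ∀ i : Fin 3, B (e i : V) p = 0 := fun i => hpU _ (e i).2
  have hBpe : ∀ i : Fin 3, B p (e i : V) = 0 := fun i => hrefl _ _ (hBep i)
  -- the 4-space S
  set S : Submodule F V := U ⊔ Submodule.span F {p} with hSdef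
  have hdisj : Disjoint U (Submodule.span F {p}) :=
    hcompl.disjoint.mono_right (Submodule.span_le.mpr (by simpa using hpW))
  have hrankS : finrank F S = 4 := by
    have h1 : finrank F (Submodule.span F {p}) = 1 := finrank_span_singleton hp0
    have h2 : finrank F S + finrank F (U ⊓ Submodule.span F {p} : Submodule F V)
        = finrank F U + finrank F (Submodule.span F {p}) := by
      rw [hSdef]; exact Submodule.finrank_sup_add_finrank_inf_eq _ _
    rw [hdisj.eq_bot, finrank_bot] at h2
    omega
  have hUS : U ≤ S := le_sup_left
  have hpS : p ∈ S := Submodule.mem_sup_right (Submodule.mem_span_singleton_self p)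
  -- basis vectors of S
  let gv : Fin 4 → V := ![(e 0 : V), (e 1 : V), (e 2 : V), p]
  let g : Fin 4 → S := ![⟨(e 0 : V), hUS (e 0).2⟩, ⟨(e 1 : V), hUS (e 1).2⟩,
    ⟨(e 2 : V), hUS (e 2).2⟩, ⟨p, hpS⟩]
  have hgv : ∀ i, (g i : V) = gv i := by
    intro i; fin_cases i <;> rfl
  have hvv : ∀ i j : Fin 4, i ≠ j → B (gv i) (gv j) = 0 := by
    have e01 : B (e 0 : V) (e 1 : V) = 0 := he 0 1 (by decide)
    have e02 : B (e 0 : V) (e 2 : V) = 0 := he 0 2 (by decide)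
    have e10 : B (e 1 : V) (e 0 : V) = 0 := he 1 0 (by decide)
    have e12 : B (e 1 : V) (e 2 : V) = 0 := he 1 2 (by decide)
    have e20 : B (e 2 : V) (e 0 : V) = 0 := he 2 0 (by decide)
    have e21 : B (e 2 : V) (e 1 : V) = 0 := he 2 1 (by decide)
    have ep0 := hBep 0
    have ep1 := hBep 1
    have ep2 := hBep 2
    have pe0 := hBpe 0
    have pe1 := hBpe 1
    have pe2 := hBpe 2
    intro i j hij
    fin_cases i <;> fin_cases j <;>
      first
        | exact absurd rfl hij
        | assumption
  have hvd : ∀ i : Fin 4, B (gv i) (gv i) ≠ 0 := by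
    intro i
    fin_cases i
    · exact hed 0
    · exact hed 1
    · exact hed 2
    · show B p p ≠ 0
      rw [hBpp]; exact ht0
  have heS : (B.restrict S).iIsOrtho g := by
    intro i j hij
    show B (g i : V) (g j : V) = 0
    rw [hgv, hgv]; exact hvv i j hij
  have hgd : ∀ i : Fin 4, ¬(B.restrict S).IsOrtho (g i) (g i) := by
    intro i h
    exact hvd i (by rw [← hgv]; exact h)
  have hli : LinearIndependent F g :=
    LinearMap.BilinForm.linearIndependent_of_iIsOrtho heS hgd
  let bS : Basis (Fin 4) F S := basisOfLinearIndependentOfCardEqFinrank hli (by simp [hrankS])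
  have hbS : ⇑bS = g := coe_basisOfLinearIndependentOfCardEqFinrank _ _
  have hSnd : (B.restrict S).Nondegenerate := by
    rw [LinearMap.BilinForm.iIsOrtho.nondegenerate_iff_not_isOrtho_basis_self (B.restrict S) bS
      (by rw [hbS]; exact heS)]
    intro i
    rw [hbS]
    exact hgd i
  refine ⟨p, by rw [hBpp]; exact ht0, hpU, hrankS, hSnd, 4, bS, ?_⟩
  rw [if_pos (by decide : Even 4)]
  have hM : (Matrix.of fun i j => (B.restrict S) (bS i) (bS j)) =
      Matrix.diagonal fun i : Fin 4 => B (gv i) (gv i) := by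
    ext i j
    by_cases hij : i = j
    · subst hij
      rw [Matrix.diagonal_apply_eq, Matrix.of_apply, hbS]
      show B (g i : V) (g i : V) = _
      rw [hgv]
    · rw [Matrix.diagonal_apply_ne _ hij, Matrix.of_apply, hbS]
      show B (g i : V) (g j : V) = 0
      rw [hgv, hgv]; exact hvv i j hij
  rw [hM, Matrix.det_diagonal, Fin.prod_univ_four]
  refine ⟨t, ?_⟩
  have h0 : B (gv 0) (gv 0) = B (e 0 : V) (e 0 : V) := rfl
  have h1 : B (gv 1) (gv 1) = B (e 1 : V) (e 1 : V) := rfl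
  have h2 : B (gv 2) (gv 2) = B (e 2 : V) (e 2 : V) := rfl
  have h3 : B (gv 3) (gv 3) = t := by rw [show gv 3 = p from rfl, hBpp]
  rw [h0, h1, h2, h3]
  norm_num
  try rw [htdef]
  try ring
  exact Or.inl trivial
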